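/- Let F be a field and A, B ∈ F with −B³·(A³ + 27·B) ≠ 0, so that the Weierstrass curve W : y² + A·x·y − B·y = x³ over F is an elliptic curve. Then (0, 0) is an affine F-rational point of W, its negative in the group W(F) is the point (0, B), and (0, 0) has order exactly 3 in W(F). -/

import Mathlib

open WeierstrassCurve
open Classical

private lemma some_congr {F : Type*} [Field F] {W : WeierstrassCurve.Affine F}
    {x y x' y' : F} (hx : x = x') (hy : y = y')
    (h : W.Nonsingular x y) (h' : W.Nonsingular x' y') :
    Affine.Point.some x y h = Affine.Point.some x' y' h' := by subst hx; subst hy; rfl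

/-- For the Weierstrass curve `W : y² + A·x·y − B·y = x³` over a field `F` with
`−B³·(A³ + 27·B) ≠ 0` (so `W` is an elliptic curve), the point `(0, 0)` is an affine
`F`-rational point of `W`, it is nonsingular, its negative in the group `W(F)` is the
nonsingular point `(0, B)`, and `(0, 0)` has order exactly `3` in `W(F)`. -/
theorem stmt_2 (F : Type*) [Field F] (A B : F)
    (hΔ : -B ^ 3 * (A ^ 3 + 27 * B) ≠ 0) :
    (⟨A, 0, -B, 0, 0⟩ : WeierstrassCurve F).toAffine.Equation 0 0 ∧
    ∃ (h₀ : (⟨A, 0, -B, 0, 0⟩ : WeierstrassCurve F).toAffine.Nonsingular 0 0)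
      (h₁ : (⟨A, 0, -B, 0, 0⟩ : WeierstrassCurve F).toAffine.Nonsingular 0 B),
      -(Affine.Point.some 0 0 h₀) = Affine.Point.some 0 B h₁ ∧
      addOrderOf (Affine.Point.some 0 0 h₀) = 3 := by
  set W : WeierstrassCurve F := ⟨A, 0, -B, 0, 0⟩ with hW
  have hB : B ≠ 0 := by
    intro h; apply hΔ; rw [h]; ring
  have heq : W.toAffine.Equation 0 0 := by
    simp [Affine.equation_iff, hW]
  have hΔ' : W.toAffine.Δ ≠ 0 := by
    have : W.toAffine.Δ = -B ^ 3 * (A ^ 3 + 27 * B) := by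
      simp only [WeierstrassCurve.Δ, b₂, b₄, b₆, b₈, hW]
      ring
    rw [this]; exact hΔ
  have h₀ : W.toAffine.Nonsingular 0 0 := (W.toAffine.equation_iff_nonsingular_of_Δ_ne_zero hΔ').mp heq
  have hneg : W.toAffine.negY 0 0 = B := by simp [Affine.negY, hW]
  have h₁ : W.toAffine.Nonsingular 0 B := hneg ▸ (Affine.nonsingular_neg 0 0).mpr h₀
  refine ⟨heq, h₀, h₁, ?_, ?_⟩
  · rw [Affine.Point.neg_some]
    exact some_congr rfl hneg _ _
  · set P : W.toAffine.Point := Affine.Point.some 0 0 h₀ with hP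
    have hy : (0 : F) ≠ W.toAffine.negY 0 0 := by rw [hneg]; exact fun h => hB h.symm
    have hL : W.toAffine.slope 0 0 0 0 = 0 := by
      rw [Affine.slope_of_Y_ne rfl hy]
      simp [hW]
    have hx2 : W.toAffine.addX 0 0 (W.toAffine.slope 0 0 0 0) = 0 := by
      rw [hL]; simp [Affine.addX, hW]
    have hy2 : W.toAffine.addY 0 0 0 (W.toAffine.slope 0 0 0 0) = B := by
      rw [Affine.addY, Affine.negAddY, hL]
      simp [Affine.addX, Affine.negY, hW]
    have h2 : P + P = Affine.Point.some 0 B h₁ := by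
      rw [hP, Affine.Point.add_self_of_Y_ne hy]
      exact some_congr hx2 hy2 _ _
    have h3 : P + P + P = 0 := by
      rw [h2, hP, Affine.Point.add_of_Y_eq rfl hneg.symm]
    have hPne : P ≠ 0 := by
      rw [hP]
      exact fun h => by simp at h
    haveI : Fact (Nat.Prime 3) := ⟨by norm_num⟩
    refine addOrderOf_eq_prime ?_ hPne
    rw [show (3 : ℕ) = 2 + 1 from rfl, add_nsmul, two_nsmul, one_nsmul]
    exact h3
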